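/- Let F^R be a twinfree rooted graph whose root set R has exactly two elements, let G be a twinfree graph (twinfree with empty root set), let z = (z_i)_{i∈V(G)} ∈ [0,1]^{V(G)} satisfy ∑_{i∈V(G)} z_i = 1, and let W_G^z be a z-scaled graphon representation of G with partition (Ω_i)_{i∈V(G)}. Let m = (m_i)_{i∈V(F)} ∈ ℕ^{V(F)} have positive entries with ∑_{i∈R} m_i = 2. Let (x,y) ∈ Ω² and let H^T be the (x,y)-rooted version of G for the partition (Ω_i). If v*(F^R) ≥ v*(H^T) and |R| ≥ |T|, then T_{F^R(m)}W_G^z(x,y) = ∑_φ ∏_{i∈V(F)∖R} z_{φ(i)}^{m_i}, where the sum is over all root-order-preserving root-respecting relation-preserving functions φ : V(F) → V(H) from F^R to H^T. -/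

import Mathlib

open scoped Classical
open MeasureTheory

noncomputable section

variable {Ω : Type*} [MeasurableSpace Ω]

/-- The point assignment sending the roots `p, q` to `x, y` and every other index `i`
to the integration variable `v i`. -/
def asg {A : Type*} [DecidableEq A] (p q : A) (x y : Ω) (v : A → Ω) (i : A) : Ω :=
  if i = p then x else if i = q then y else v i

/-- The rooted induced density `T_{G^{(p,q)}} W (x,y)`: the integral, over assignments of
points of `Ω` to the non-root indices, of the product over unordered pairs `{i,j}` of
distinct indices (enumerated by the strict order `lt`) of `W` on edges and `1 - W` on
non-edges.  (Integrating over all coordinates of `A` with respect to the product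
probability measure is equivalent to integrating over the non-root coordinates only,
since the integrand does not depend on the coordinates at `p` and `q`.) -/
def rdensity {A : Type*} [Fintype A] [DecidableEq A] (lt : A → A → Prop)
    (μ : Measure Ω) (Gr : SimpleGraph A) (p q : A) (W : Ω → Ω → ℝ) (x y : Ω) : ℝ :=
  ∫ v : A → Ω,
    ∏ e ∈ Finset.univ.filter (fun e : A × A => lt e.1 e.2),
      (if Gr.Adj e.1 e.2 then W (asg p q x y v e.1) (asg p q x y v e.2)
       else 1 - W (asg p q x y v e.1) (asg p q x y v e.2))
    ∂(Measure.pi fun _ : A => μ)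

/-- The `z`-scaled graphon representation `W_G^z` of `G` for the partition `(Ω_i)`:
equal to `1[ij ∈ E(G)]` on `Ω_i × Ω_j`. -/
def WGz {VG : Type*} (G : SimpleGraph VG) (Om : VG → Set Ω) : Ω → Ω → ℝ :=
  fun u w => if ∃ i j : VG, G.Adj i j ∧ u ∈ Om i ∧ w ∈ Om j then 1 else 0

/-- The set `X = {v ∈ V(G) : {x,y} ∩ Ω_v ≠ ∅}` of parts hit by `x` or `y`. -/
def hitSet {VG : Type*} (Om : VG → Set Ω) (x y : Ω) : Set VG := {v | x ∈ Om v ∨ y ∈ Om v}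

/-- The `(x,y)`-rooted version `H^T` of `G`: every vertex of `X = hitSet Om x y` is blown up
by a factor `2`; the vertex set is `VG ⊕ X` (original copies plus one duplicate for each
element of `X`), the duplicates `Sum.inr` forming the set `T` of roots.  Adjacency is
inherited through the projection to `VG`. -/
def rootedVersion {VG : Type*} (G : SimpleGraph VG) (Om : VG → Set Ω) (x y : Ω) :
    SimpleGraph (VG ⊕ ↥(hitSet Om x y)) :=
  SimpleGraph.comap (Sum.elim id Subtype.val) G

/-- The root order on the roots `T` of the `(x,y)`-rooted version: the duplicate of the part
containing `x` comes first.  (The value on non-roots is irrelevant.) -/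
def TLe {VG : Type*} (Om : VG → Set Ω) (x y : Ω) :
    (VG ⊕ ↥(hitSet Om x y)) → (VG ⊕ ↥(hitSet Om x y)) → Prop
  | Sum.inr w, Sum.inr w' => x ∈ Om w.val ∨ w = w'
  | _, _ => True


lemma keyS {VF VG : Type*} [Fintype VF] [Fintype VG] {F : SimpleGraph VF} {G : SimpleGraph VG}
    {r₁ r₂ : VF} (hr : r₁ ≠ r₂)
    (htfF : ∀ u v : VF, Xor' (u ∈ ({r₁, r₂} : Set VF)) (v ∈ ({r₁, r₂} : Set VF)) ∨
      (F.neighborSet u = F.neighborSet v → u = v))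
    (htfG : ∀ u v : VG, G.neighborSet u = G.neighborSet v → u = v)
    {m : VF → ℕ} (hm : ∀ i, 0 < m i) (g₁ g₂ : VG)
    (hcard : Nat.card VG ≤ ({g₁, g₂} : Set VG).ncard +
      {v : VF | v ∉ ({r₁, r₂} : Set VF) ∧ ¬∃ s ∈ ({r₁, r₂} : Set VF),
        F.neighborSet v = F.neighborSet s}.ncard)
    (ψ : (Σ i : VF, Fin (m i)) → VG)
    (hrel : ∀ a b : Σ i : VF, Fin (m i), F.Adj a.1 b.1 ↔ G.Adj (ψ a) (ψ b)) :
    g₁ ≠ g₂ ∧ ∀ a b : Σ i : VF, Fin (m i), a.1 = b.1 → ψ a = ψ b := by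
  classical
  set SF := {v : VF | v ∉ ({r₁, r₂} : Set VF) ∧ ¬∃ s ∈ ({r₁, r₂} : Set VF),
        F.neighborSet v = F.neighborSet s} with hSF
  have stepA : ∀ a b : (Σ i : VF, Fin (m i)), ψ a = ψ b →
      F.neighborSet a.1 = F.neighborSet b.1 := by
    intro a b he
    ext k
    simp only [SimpleGraph.mem_neighborSet]
    constructor
    · intro h
      exact (hrel b ⟨k, ⟨0, hm k⟩⟩).mpr (he ▸ (hrel a ⟨k, ⟨0, hm k⟩⟩).mp h)
    · intro h
      exact (hrel a ⟨k, ⟨0, hm k⟩⟩).mpr (he ▸ (hrel b ⟨k, ⟨0, hm k⟩⟩).mp h)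
  set t : VG → Set VF := fun g =>
    if h : ∃ a : (Σ i : VF, Fin (m i)), ψ a = g then F.neighborSet h.choose.1 else ∅ with ht
  have stepB : ∀ a : (Σ i : VF, Fin (m i)), t (ψ a) = F.neighborSet a.1 := by
    intro a
    have hex : ∃ b : (Σ i : VF, Fin (m i)), ψ b = ψ a := ⟨a, rfl⟩
    simp only [ht, dif_pos hex]
    exact stepA _ _ hex.choose_spec
  have hImN : Set.range (fun i : VF => F.neighborSet i) ⊆ t '' Set.range ψ := by
    rintro s ⟨i, rfl⟩
    exact ⟨ψ ⟨i, ⟨0, hm i⟩⟩, ⟨⟨i, ⟨0, hm i⟩⟩, rfl⟩, stepB _⟩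
  have hc1 : (Set.range (fun i : VF => F.neighborSet i)).ncard = SF.ncard + 2 := by
    have himg : Set.range (fun i : VF => F.neighborSet i)
        = (fun i : VF => F.neighborSet i) '' (SF ∪ {r₁, r₂}) := by
      apply Set.Subset.antisymm
      · rintro s ⟨i, rfl⟩
        by_cases hi : i ∈ SF ∪ ({r₁, r₂} : Set VF)
        · exact ⟨i, hi, rfl⟩
        · simp only [Set.mem_union, not_or] at hi
          obtain ⟨h1, h2⟩ := hi
          rw [hSF, Set.mem_setOf_eq, not_and, not_not] at h1
          obtain ⟨s, hsR, hNs⟩ := h1 h2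
          exact ⟨s, Or.inr hsR, hNs.symm⟩
      · exact Set.image_subset_range _ _
    have hinjOn : Set.InjOn (fun i : VF => F.neighborSet i) (SF ∪ {r₁, r₂}) := by
      intro u hu v hv he
      rcases htfF u v with hx | himp
      · rcases hx with ⟨huR, hvR⟩ | ⟨hvR, huR⟩
        · rcases hv with hvSF | hvR'
          · exact absurd ⟨u, huR, he.symm⟩ hvSF.2
          · exact absurd hvR' hvR
        · rcases hu with huSF | huR'
          · exact absurd ⟨v, hvR, he⟩ huSF.2
          · exact absurd huR' huR
      · exact himp he
    have hdis : Disjoint SF ({r₁, r₂} : Set VF) :=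
      Set.disjoint_left.mpr (fun a ha => ha.1)
    rw [himg, Set.ncard_image_of_injOn hinjOn,
      Set.ncard_union_eq hdis (Set.toFinite _) (Set.toFinite _), Set.ncard_pair hr]
  have hrange_le : (Set.range (fun i : VF => F.neighborSet i)).ncard ≤ (Set.range ψ).ncard :=
    le_trans (Set.ncard_le_ncard hImN (Set.toFinite _)) (Set.ncard_image_le (Set.toFinite _))
  have hrange_univ : (Set.range ψ).ncard ≤ Nat.card VG := by
    have := Set.ncard_le_ncard (Set.subset_univ (Set.range ψ)) Set.finite_univ
    simpa [Set.ncard_univ] using this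
  have hne : g₁ ≠ g₂ := by
    rintro rfl
    have hX1 : ({g₁, g₁} : Set VG).ncard = 1 := by
      simp [Set.pair_eq_singleton]
    rw [hX1] at hcard
    omega
  refine ⟨hne, ?_⟩
  have hX2 : ({g₁, g₂} : Set VG).ncard = 2 := Set.ncard_pair hne
  rw [hX2] at hcard
  have huniv : Set.range ψ = Set.univ := by
    apply Set.eq_of_subset_of_ncard_le (Set.subset_univ _) _ Set.finite_univ
    rw [Set.ncard_univ]
    omega
  have hsurj : ∀ g : VG, ∃ c, ψ c = g := by
    intro g
    have hg : g ∈ Set.range ψ := huniv ▸ Set.mem_univ g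
    exact hg
  intro a b hab
  apply htfG
  ext u
  obtain ⟨c, rfl⟩ := hsurj u
  simp only [SimpleGraph.mem_neighborSet]
  rw [← hrel a c, ← hrel b c, hab]


lemma partI {A VG : Type*} [Fintype A] [DecidableEq A] [Fintype VG] [DecidableEq VG]
    (μ : Measure Ω) [IsProbabilityMeasure μ]
    (G : SimpleGraph VG) (z : VG → ℝ) (hz0 : ∀ i, 0 ≤ z i)
    (Om : VG → Set Ω) (hOmm : ∀ i, MeasurableSet (Om i))
    (hOmd : ∀ i j : VG, i ≠ j → Disjoint (Om i) (Om j))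
    (hOmu : (⋃ i : VG, Om i) = Set.univ)
    (hOmz : ∀ i, μ (Om i) = ENNReal.ofReal (z i))
    (Gr : SimpleGraph A) (lt : A → A → Prop)
    (htot : ∀ a b : A, a ≠ b → lt a b ∨ lt b a)
    (p q : A) (hpq : p ≠ q) (x y : Ω) :
    rdensity lt μ Gr p q (WGz G Om) x y
      = ∑ ψ ∈ Finset.univ.filter (fun ψ : A → VG =>
          (∀ a b : A, Gr.Adj a b ↔ G.Adj (ψ a) (ψ b)) ∧ x ∈ Om (ψ p) ∧ y ∈ Om (ψ q)),
          ∏ a ∈ Finset.univ.filter (fun a : A => a ≠ p ∧ a ≠ q), z (ψ a) := by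
  classical
  letI : MeasureSpace Ω := ⟨μ⟩
  haveI : SigmaFinite (volume : Measure Ω) := (inferInstance : SigmaFinite μ)
  have hvol : (Measure.pi fun _ : A => μ) = (volume : Measure (A → Ω)) := rfl
  have hP : ∀ ω : Ω, ∃ i, ω ∈ Om i := by
    intro ω
    have : ω ∈ ⋃ i, Om i := hOmu ▸ Set.mem_univ ω
    exact Set.mem_iUnion.mp this
  choose P hPmem using hP
  have hPuniq : ∀ (ω : Ω) (i : VG), ω ∈ Om i → P ω = i := by
    intro ω i hi
    by_contra hne
    exact Set.disjoint_left.mp (hOmd _ _ hne) (hPmem ω) hi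
  have hW : ∀ u w : Ω, WGz G Om u w = if G.Adj (P u) (P w) then 1 else 0 := by
    intro u w
    simp only [WGz]
    by_cases h : G.Adj (P u) (P w)
    · rw [if_pos ⟨P u, P w, h, hPmem u, hPmem w⟩, if_pos h]
    · rw [if_neg _, if_neg h]
      rintro ⟨i, j, hij, hui, hwj⟩
      exact h (by rw [hPuniq u i hui, hPuniq w j hwj]; exact hij)
  set h : (A → VG) → A → Ω → ℝ := fun ψ a ω =>
    if a = p then (if x ∈ Om (ψ a) then 1 else 0)
    else if a = q then (if y ∈ Om (ψ a) then 1 else 0)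
    else (if ω ∈ Om (ψ a) then 1 else 0) with hh
  have hpoint : ∀ v : A → Ω,
      (∏ e ∈ Finset.univ.filter (fun e : A × A => lt e.1 e.2),
        (if Gr.Adj e.1 e.2 then WGz G Om (asg p q x y v e.1) (asg p q x y v e.2)
         else 1 - WGz G Om (asg p q x y v e.1) (asg p q x y v e.2)))
      = ∑ ψ : A → VG, (if (∀ a b : A, Gr.Adj a b ↔ G.Adj (ψ a) (ψ b)) then (1:ℝ) else 0)
          * ∏ a : A, h ψ a (v a) := by
    intro v
    set w : A → Ω := asg p q x y v with hwdef
    set ψ₀ : A → VG := fun a => P (w a) with hψ₀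
    have hprod : ∀ ψ : A → VG, (∏ a : A, h ψ a (v a)) = if ψ = ψ₀ then 1 else 0 := by
      intro ψ
      have h1 : ∀ a : A, h ψ a (v a) = if w a ∈ Om (ψ a) then (1:ℝ) else 0 := by
        intro a
        by_cases hap : a = p
        · subst hap; simp [hh, hwdef, asg]
        · by_cases haq : a = q
          · subst haq; simp [hh, hwdef, asg, hap]
          · simp [hh, hwdef, asg, hap, haq]
      simp_rw [h1]
      rw [Finset.prod_boole]
      by_cases hψ : ψ = ψ₀
      · subst hψ
        rw [if_pos, if_pos rfl]
        intro a _
        exact hPmem (w a)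
      · rw [if_neg, if_neg hψ]
        intro hall
        apply hψ
        funext a
        exact (hPuniq _ _ (hall a (Finset.mem_univ a))).symm
    simp_rw [hprod, mul_ite, mul_one, mul_zero]
    rw [Finset.sum_ite_eq' Finset.univ ψ₀
      (fun ψ => if (∀ a b : A, Gr.Adj a b ↔ G.Adj (ψ a) (ψ b)) then (1:ℝ) else 0),
      if_pos (Finset.mem_univ _)]
    have hfac : ∀ e : A × A,
        (if Gr.Adj e.1 e.2 then WGz G Om (w e.1) (w e.2) else 1 - WGz G Om (w e.1) (w e.2))
        = if (Gr.Adj e.1 e.2 ↔ G.Adj (ψ₀ e.1) (ψ₀ e.2)) then 1 else 0 := by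
      intro e
      rw [hW]
      by_cases hadj : Gr.Adj e.1 e.2 <;> by_cases hG : G.Adj (P (w e.1)) (P (w e.2)) <;>
        simp [hadj, hG, hψ₀]
    simp_rw [hfac]
    rw [Finset.prod_boole]
    by_cases hrel : ∀ a b : A, Gr.Adj a b ↔ G.Adj (ψ₀ a) (ψ₀ b)
    · rw [if_pos, if_pos hrel]
      intro e _
      exact hrel e.1 e.2
    · rw [if_neg, if_neg hrel]
      intro hall
      apply hrel
      intro a b
      by_cases hab : a = b
      · subst hab
        simp [SimpleGraph.irrefl]
      · rcases htot a b hab with hlt | hlt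
        · exact hall (a, b) (by simp [Finset.mem_filter, hlt])
        · have := hall (b, a) (by simp [Finset.mem_filter, hlt])
          rw [Gr.adj_comm, G.adj_comm]
          exact this
  have hint : ∀ (ψ : A → VG) (a : A), Integrable (h ψ a) μ := by
    intro ψ a
    by_cases hap : a = p
    · subst hap; simp only [hh, if_pos rfl]; exact integrable_const _
    · by_cases haq : a = q
      · subst haq; simp only [hh, if_neg hap, if_pos rfl]; exact integrable_const _
      · simp only [hh, if_neg hap, if_neg haq]
        rw [show (fun ω => if ω ∈ Om (ψ a) then (1:ℝ) else 0)
            = Set.indicator (Om (ψ a)) (fun _ => 1) from by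
          ext ω; simp [Set.indicator_apply]]
        exact (integrable_const 1).indicator (hOmm _)
  unfold rdensity
  simp_rw [hpoint]
  rw [MeasureTheory.integral_finset_sum]
  swap
  · intro ψ _
    apply Integrable.const_mul
    rw [hvol]
    exact Integrable.fintype_prod (fun a => hint ψ a)
  have hInt : ∀ (ψ : A → VG),
      ∫ v : A → Ω, ∏ a : A, h ψ a (v a) ∂(Measure.pi fun _ : A => μ)
        = ∏ a : A, ∫ ω, h ψ a ω ∂μ := by
    intro ψ
    rw [hvol]
    exact MeasureTheory.integral_fintype_prod_eq_prod (fun a => h ψ a)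
  simp_rw [MeasureTheory.integral_const_mul, hInt]
  have hip : ∀ ψ : A → VG, ∫ ω, h ψ p ω ∂μ = if x ∈ Om (ψ p) then 1 else 0 := by
    intro ψ; simp [hh, measure_univ]
  have hiq : ∀ ψ : A → VG, ∫ ω, h ψ q ω ∂μ = if y ∈ Om (ψ q) then 1 else 0 := by
    intro ψ; simp [hh, Ne.symm hpq, measure_univ]
  have hio : ∀ (ψ : A → VG) (a : A), a ≠ p → a ≠ q → ∫ ω, h ψ a ω ∂μ = z (ψ a) := by
    intro ψ a hap haq
    simp only [hh, if_neg hap, if_neg haq]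
    rw [show (fun ω => if ω ∈ Om (ψ a) then (1:ℝ) else 0)
        = Set.indicator (Om (ψ a)) (fun _ => 1) from by
      ext ω; simp [Set.indicator_apply]]
    rw [MeasureTheory.integral_indicator_const (1:ℝ) (hOmm _), measureReal_def, hOmz,
      ENNReal.toReal_ofReal (hz0 _), smul_eq_mul, mul_one]
  have hsplit : ∀ ψ : A → VG, (∏ a : A, ∫ ω, h ψ a ω ∂μ)
      = (if x ∈ Om (ψ p) then 1 else 0) * ((if y ∈ Om (ψ q) then 1 else 0)
        * ∏ a ∈ Finset.univ.filter (fun a : A => a ≠ p ∧ a ≠ q), z (ψ a)) := by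
    intro ψ
    rw [← Finset.mul_prod_erase Finset.univ _ (Finset.mem_univ p),
      ← Finset.mul_prod_erase (Finset.univ.erase p) _
        (Finset.mem_erase.mpr ⟨Ne.symm hpq, Finset.mem_univ q⟩),
      hip, hiq]
    congr 2
    rw [show (Finset.univ.erase p).erase q = Finset.univ.filter (fun a : A => a ≠ p ∧ a ≠ q)
      from by ext a; simp [Finset.mem_erase, Finset.mem_filter]; tauto]
    apply Finset.prod_congr rfl
    intro a ha
    rw [Finset.mem_filter] at ha
    exact hio ψ a ha.2.1 ha.2.2
  simp_rw [hsplit]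
  rw [Finset.sum_filter]
  apply Finset.sum_congr rfl
  intro ψ _
  by_cases h1 : (∀ a b : A, Gr.Adj a b ↔ G.Adj (ψ a) (ψ b)) <;>
    by_cases h2 : x ∈ Om (ψ p) <;> by_cases h3 : y ∈ Om (ψ q) <;>
    simp [h1, h2, h3]


/-- Let `F^R` be a twinfree rooted graph whose root set `R = {r₁, r₂}` has
exactly two elements (ordered `r₁` then `r₂` by the linear order of `VF`), let `G` be a
twinfree graph, `z` a probability vector on `V(G)` and `W_G^z` a `z`-scaled graphon
representation of `G` with partition `(Ω_i)`.  Let `m` have positive entries with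
`m r₁ + m r₂ = 2`, let `(x,y) ∈ Ω²` and let `H^T` be the `(x,y)`-rooted version of `G`
(whose set of roots is `T = Set.range Sum.inr`, ordered so that the duplicate of the part
containing `x` comes first).  If `v*(F^R) ≥ v*(H^T)` and `|R| ≥ |T|`, then
`T_{F^R(m)} W_G^z (x,y) = ∑_φ ∏_{i ∈ V(F)∖R} z_{φ(i)}^{m_i}`, the sum being over all
root-order-preserving root-respecting relation-preserving functions `φ : V(F) → V(H)` from
`F^R` to `H^T`.

The blowup `F^R(m)` has vertex set `Σ i, Fin (m i)` with adjacency inherited from `F`; since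
`m r₁ = m r₂ = 1`, its ordered pair of roots is `(⟨r₁,0⟩, ⟨r₂,0⟩)`; unordered pairs of its
vertices are enumerated by the lexicographic strict order.  For a rooted graph `K^S`,
`v*(K^S)` is the number of non-root vertices of `K` having no twin in `S`. -/
theorem stmt16 {VF VG : Type*} [Fintype VF] [LinearOrder VF] [Fintype VG] [DecidableEq VG]
    (μ : Measure Ω) [IsProbabilityMeasure μ] [NullSingletonClass μ]
    (F : SimpleGraph VF) (r₁ r₂ : VF) (hr : r₁ ≠ r₂)
    (htfF : ∀ u v : VF, Xor' (u ∈ ({r₁, r₂} : Set VF)) (v ∈ ({r₁, r₂} : Set VF)) ∨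
      (F.neighborSet u = F.neighborSet v → u = v))
    (G : SimpleGraph VG)
    (htfG : ∀ u v : VG, G.neighborSet u = G.neighborSet v → u = v)
    (z : VG → ℝ) (hz0 : ∀ i, 0 ≤ z i) (hz1 : ∀ i, z i ≤ 1) (hzs : ∑ i : VG, z i = 1)
    (Om : VG → Set Ω) (hOmm : ∀ i, MeasurableSet (Om i))
    (hOmd : ∀ i j : VG, i ≠ j → Disjoint (Om i) (Om j))
    (hOmu : (⋃ i : VG, Om i) = Set.univ)
    (hOmz : ∀ i, μ (Om i) = ENNReal.ofReal (z i))
    (m : VF → ℕ) (hm : ∀ i, 0 < m i) (hm2 : m r₁ + m r₂ = 2)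
    (x y : Ω)
    (hvstar :
      {s : VG ⊕ ↥(hitSet Om x y) |
          s ∉ Set.range (Sum.inr : ↥(hitSet Om x y) → VG ⊕ ↥(hitSet Om x y)) ∧
          ¬ ∃ t ∈ Set.range (Sum.inr : ↥(hitSet Om x y) → VG ⊕ ↥(hitSet Om x y)),
              (rootedVersion G Om x y).neighborSet s
                = (rootedVersion G Om x y).neighborSet t}.ncard
        ≤ {v : VF | v ∉ ({r₁, r₂} : Set VF) ∧
            ¬ ∃ s ∈ ({r₁, r₂} : Set VF),
                F.neighborSet v = F.neighborSet s}.ncard)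
    (hT : (Set.range (Sum.inr : ↥(hitSet Om x y) → VG ⊕ ↥(hitSet Om x y))).ncard ≤ 2) :
    rdensity
      (fun a b : Σ i : VF, Fin (m i) => a.1 < b.1 ∨ (a.1 = b.1 ∧ (a.2 : ℕ) < (b.2 : ℕ)))
      μ (SimpleGraph.comap (Sigma.fst) F)
      ⟨r₁, ⟨0, hm r₁⟩⟩ ⟨r₂, ⟨0, hm r₂⟩⟩ (WGz G Om) x y
    = ∑ φ ∈ Finset.univ.filter (fun φ : VF → (VG ⊕ ↥(hitSet Om x y)) =>
        (∀ u v : VF, F.Adj u v ↔ (rootedVersion G Om x y).Adj (φ u) (φ v)) ∧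
        (∀ v : VF,
          φ v ∈ Set.range (Sum.inr : ↥(hitSet Om x y) → VG ⊕ ↥(hitSet Om x y))
            ↔ v ∈ ({r₁, r₂} : Set VF)) ∧
        (∀ u v : VF, u ∈ ({r₁, r₂} : Set VF) → v ∈ ({r₁, r₂} : Set VF) →
          (TLe Om x y (φ u) (φ v) ↔ (u = v ∨ (u = r₁ ∧ v = r₂))))),
      ∏ i ∈ Finset.univ.filter (fun i : VF => i ≠ r₁ ∧ i ≠ r₂),
        z (Sum.elim id Subtype.val (φ i)) ^ (m i) := by
  classical
  have hm1 : m r₁ = 1 := by have h1 := hm r₁; have h2 := hm r₂; omega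
  have hm2' : m r₂ = 1 := by have h1 := hm r₁; have h2 := hm r₂; omega
  have hP : ∀ ω : Ω, ∃ i, ω ∈ Om i := by
    intro ω
    have : ω ∈ ⋃ i, Om i := hOmu ▸ Set.mem_univ ω
    exact Set.mem_iUnion.mp this
  choose P hPmem using hP
  have hPuniq : ∀ (ω : Ω) (i : VG), ω ∈ Om i → P ω = i := by
    intro ω i hi
    by_contra hne
    exact Set.disjoint_left.mp (hOmd _ _ hne) (hPmem ω) hi
  set g₁ := P x with hg1
  set g₂ := P y with hg2
  have hg₁X : g₁ ∈ hitSet Om x y := Or.inl (hPmem x)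
  have hg₂X : g₂ ∈ hitSet Om x y := Or.inr (hPmem y)
  have hXeq : hitSet Om x y = {g₁, g₂} := by
    ext v
    constructor
    · rintro (h | h)
      · exact Or.inl (hPuniq x v h).symm
      · exact Or.inr (hPuniq y v h).symm
    · rintro (rfl | rfl)
      · exact hg₁X
      · exact hg₂X
  have hpq : (⟨r₁, ⟨0, hm r₁⟩⟩ : Σ i : VF, Fin (m i)) ≠ ⟨r₂, ⟨0, hm r₂⟩⟩ := by
    intro h
    exact hr (congrArg Sigma.fst h)
  have htot : ∀ a b : (Σ i : VF, Fin (m i)), a ≠ b →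
      (a.1 < b.1 ∨ (a.1 = b.1 ∧ (a.2 : ℕ) < (b.2 : ℕ))) ∨
      (b.1 < a.1 ∨ (b.1 = a.1 ∧ (b.2 : ℕ) < (a.2 : ℕ))) := by
    rintro ⟨i, c⟩ ⟨j, d⟩ hab
    rcases lt_trichotomy i j with h | h | h
    · exact Or.inl (Or.inl h)
    · subst h
      rcases Nat.lt_trichotomy (c : ℕ) (d : ℕ) with hn | hn | hn
      · exact Or.inl (Or.inr ⟨rfl, hn⟩)
      · exact absurd (congrArg (Sigma.mk i) (Fin.ext hn)) hab
      · exact Or.inr (Or.inr ⟨rfl, hn⟩)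
    · exact Or.inr (Or.inl h)
  rw [partI μ G z hz0 Om hOmm hOmd hOmu hOmz (SimpleGraph.comap Sigma.fst F)
    (fun a b : Σ i : VF, Fin (m i) => a.1 < b.1 ∨ (a.1 = b.1 ∧ (a.2 : ℕ) < (b.2 : ℕ)))
    htot ⟨r₁, ⟨0, hm r₁⟩⟩ ⟨r₂, ⟨0, hm r₂⟩⟩ hpq x y]
  -- neighborSet characterization in the rooted version
  have hNH : ∀ s t : VG ⊕ ↥(hitSet Om x y),
      ((rootedVersion G Om x y).neighborSet s = (rootedVersion G Om x y).neighborSet t)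
        ↔ Sum.elim id Subtype.val s = Sum.elim id Subtype.val t := by
    intro s t
    constructor
    · intro he
      apply htfG
      ext u
      have h1 := Set.ext_iff.mp he (Sum.inl u)
      simpa [rootedVersion, SimpleGraph.mem_neighborSet, SimpleGraph.comap_adj] using h1
    · intro he
      ext c
      simp [rootedVersion, SimpleGraph.mem_neighborSet, SimpleGraph.comap_adj, he]
  -- the counting hypothesis
  have hsub : Sum.inl '' (hitSet Om x y)ᶜ ⊆
      {s : VG ⊕ ↥(hitSet Om x y) |
          s ∉ Set.range (Sum.inr : ↥(hitSet Om x y) → VG ⊕ ↥(hitSet Om x y)) ∧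
          ¬ ∃ t ∈ Set.range (Sum.inr : ↥(hitSet Om x y) → VG ⊕ ↥(hitSet Om x y)),
              (rootedVersion G Om x y).neighborSet s
                = (rootedVersion G Om x y).neighborSet t} := by
    rintro s ⟨u, huX, rfl⟩
    constructor
    · rintro ⟨w, hw⟩
      exact Sum.inr_ne_inl hw
    · rintro ⟨t, ⟨w, rfl⟩, hN⟩
      have := (hNH _ _).mp hN
      simp only [Sum.elim_inl, Sum.elim_inr, id_eq] at this
      exact huX (this ▸ w.property)
  have hcard : Nat.card VG ≤ ({g₁, g₂} : Set VG).ncard +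
      {v : VF | v ∉ ({r₁, r₂} : Set VF) ∧ ¬∃ s ∈ ({r₁, r₂} : Set VF),
        F.neighborSet v = F.neighborSet s}.ncard := by
    have h1 : (hitSet Om x y).ncard + ((hitSet Om x y)ᶜ).ncard = Nat.card VG :=
      Set.ncard_add_ncard_compl _
    have hX : (hitSet Om x y).ncard = ({g₁, g₂} : Set VG).ncard := by rw [hXeq]
    have h2 : ((hitSet Om x y)ᶜ).ncard ≤
        {s : VG ⊕ ↥(hitSet Om x y) |
          s ∉ Set.range (Sum.inr : ↥(hitSet Om x y) → VG ⊕ ↥(hitSet Om x y)) ∧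
          ¬ ∃ t ∈ Set.range (Sum.inr : ↥(hitSet Om x y) → VG ⊕ ↥(hitSet Om x y)),
              (rootedVersion G Om x y).neighborSet s
                = (rootedVersion G Om x y).neighborSet t}.ncard := by
      calc ((hitSet Om x y)ᶜ).ncard = (Sum.inl '' (hitSet Om x y)ᶜ).ncard :=
            (Set.ncard_image_of_injective _ Sum.inl_injective).symm
        _ ≤ _ := Set.ncard_le_ncard hsub (Set.toFinite _)
    omega
  -- consequences for maps in the left sum
  have hA : ∀ ψ : (Σ i : VF, Fin (m i)) → VG,
      ((∀ a b : Σ i : VF, Fin (m i),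
          (SimpleGraph.comap Sigma.fst F).Adj a b ↔ G.Adj (ψ a) (ψ b)) ∧
        x ∈ Om (ψ ⟨r₁, ⟨0, hm r₁⟩⟩) ∧ y ∈ Om (ψ ⟨r₂, ⟨0, hm r₂⟩⟩)) →
      (ψ ⟨r₁, ⟨0, hm r₁⟩⟩ = g₁ ∧ ψ ⟨r₂, ⟨0, hm r₂⟩⟩ = g₂ ∧ g₁ ≠ g₂ ∧
        ∀ a b : Σ i : VF, Fin (m i), a.1 = b.1 → ψ a = ψ b) := by
    rintro ψ ⟨hrel, hx1, hy1⟩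
    have hF : ∀ a b : (Σ i : VF, Fin (m i)), F.Adj a.1 b.1 ↔ G.Adj (ψ a) (ψ b) := hrel
    obtain ⟨hne, hconst⟩ := keyS hr htfF htfG hm g₁ g₂ hcard ψ hF
    exact ⟨(hPuniq x _ hx1).symm, (hPuniq y _ hy1).symm, hne, hconst⟩
  -- the two maps of the bijection
  set Phi : ((Σ i : VF, Fin (m i)) → VG) → VF → VG ⊕ ↥(hitSet Om x y) := fun ψ v =>
    if v = r₁ then Sum.inr ⟨g₁, hg₁X⟩ else if v = r₂ then Sum.inr ⟨g₂, hg₂X⟩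
    else Sum.inl (ψ ⟨v, ⟨0, hm v⟩⟩) with hPhi
  set Psi : (VF → VG ⊕ ↥(hitSet Om x y)) → (Σ i : VF, Fin (m i)) → VG := fun φ a =>
    Sum.elim id Subtype.val (φ a.1) with hPsi
  have hprojPhi : ∀ ψ : (Σ i : VF, Fin (m i)) → VG,
      ψ ⟨r₁, ⟨0, hm r₁⟩⟩ = g₁ → ψ ⟨r₂, ⟨0, hm r₂⟩⟩ = g₂ →
      ∀ v : VF, Sum.elim id Subtype.val (Phi ψ v) = ψ ⟨v, ⟨0, hm v⟩⟩ := by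
    intro ψ hp1 hq1 v
    by_cases h1 : v = r₁
    · subst h1
      simp only [hPhi, if_pos rfl, Sum.elim_inr]
      exact hp1.symm
    · by_cases h2 : v = r₂
      · subst h2
        simp only [hPhi, if_neg h1, if_pos rfl, Sum.elim_inr]
        exact hq1.symm
      · simp only [hPhi, if_neg h1, if_neg h2, Sum.elim_inl, id_eq]
  -- facts about maps in the right sum
  have hB : ∀ φ : VF → VG ⊕ ↥(hitSet Om x y),
      ((∀ u v : VF, F.Adj u v ↔ (rootedVersion G Om x y).Adj (φ u) (φ v)) ∧
        (∀ v : VF,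
          φ v ∈ Set.range (Sum.inr : ↥(hitSet Om x y) → VG ⊕ ↥(hitSet Om x y))
            ↔ v ∈ ({r₁, r₂} : Set VF)) ∧
        (∀ u v : VF, u ∈ ({r₁, r₂} : Set VF) → v ∈ ({r₁, r₂} : Set VF) →
          (TLe Om x y (φ u) (φ v) ↔ (u = v ∨ (u = r₁ ∧ v = r₂))))) →
      (φ r₁ = Sum.inr ⟨g₁, hg₁X⟩ ∧ φ r₂ = Sum.inr ⟨g₂, hg₂X⟩) := by
    rintro φ ⟨hrel, hroot, hord⟩
    obtain ⟨w₁, hw₁⟩ := (hroot r₁).mpr (by simp)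
    obtain ⟨w₂, hw₂⟩ := (hroot r₂).mpr (by simp)
    have h21 := hord r₂ r₁ (by simp) (by simp)
    rw [← hw₂, ← hw₁] at h21
    have h21' : ¬ (x ∈ Om w₂.val ∨ w₂ = w₁) := by
      intro hcon
      rcases h21.mp hcon with h | h
      · exact hr h.symm
      · exact hr h.1.symm
    push_neg at h21'
    obtain ⟨hnx, hnw⟩ := h21'
    have h12 := hord r₁ r₂ (by simp) (by simp)
    rw [← hw₁, ← hw₂] at h12
    have h12' : x ∈ Om w₁.val ∨ w₁ = w₂ := h12.mpr (Or.inr ⟨rfl, rfl⟩)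
    have hx1 : x ∈ Om w₁.val := by
      rcases h12' with h | h
      · exact h
      · exact absurd h.symm hnw
    have hy2 : y ∈ Om w₂.val := by
      rcases w₂.property with h | h
      · exact absurd h hnx
      · exact h
    constructor
    · rw [← hw₁]
      exact congrArg Sum.inr (Subtype.ext (hPuniq x _ hx1).symm)
    · rw [← hw₂]
      exact congrArg Sum.inr (Subtype.ext (hPuniq y _ hy2).symm)
  -- now the bijection between the two sums
  refine Finset.sum_bij' (fun ψ _ => Phi ψ) (fun φ _ => Psi φ) ?_ ?_ ?_ ?_ ?_
  · -- membership: Phi ψ satisfies the right-hand conditions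
    intro ψ hψ
    simp only [Finset.mem_filter, Finset.mem_univ, true_and] at hψ ⊢
    obtain ⟨hp1, hq1, hne, hconst⟩ := hA ψ hψ
    obtain ⟨hrel, -, -⟩ := hψ
    have hproj := hprojPhi ψ hp1 hq1
    refine ⟨?_, ?_, ?_⟩
    · intro u v
      have hH : (rootedVersion G Om x y).Adj (Phi ψ u) (Phi ψ v) ↔
          G.Adj (ψ ⟨u, ⟨0, hm u⟩⟩) (ψ ⟨v, ⟨0, hm v⟩⟩) := by
        rw [rootedVersion, SimpleGraph.comap_adj, hproj u, hproj v]
      rw [hH]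
      exact hrel ⟨u, ⟨0, hm u⟩⟩ ⟨v, ⟨0, hm v⟩⟩
    · intro v
      by_cases h1 : v = r₁
      · subst h1; simp [hPhi]
      · by_cases h2 : v = r₂
        · subst h2; simp [hPhi, h1]
        · simp [hPhi, h1, h2]
    · intro u v hu hv
      simp only [Set.mem_insert_iff, Set.mem_singleton_iff] at hu hv
      have hPhir₁ : Phi ψ r₁ = Sum.inr ⟨g₁, hg₁X⟩ := by simp [hPhi]
      have hPhir₂ : Phi ψ r₂ = Sum.inr ⟨g₂, hg₂X⟩ := by
        simp [hPhi, Ne.symm hr]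
      rcases hu with rfl | rfl <;> rcases hv with rfl | rfl
      · rw [hPhir₁]
        show (x ∈ Om g₁ ∨ _) ↔ _
        simp [hPmem x]
      · rw [hPhir₁, hPhir₂]
        show (x ∈ Om g₁ ∨ _) ↔ _
        simp [hPmem x, hg1]
      · rw [hPhir₂, hPhir₁]
        show (x ∈ Om g₂ ∨ (⟨g₂, hg₂X⟩ : ↥(hitSet Om x y)) = ⟨g₁, hg₁X⟩) ↔ _
        constructor
        · rintro (h | h)
          · exact absurd (hPuniq x _ h) hne
          · exact absurd (congrArg Subtype.val h).symm hne
        · rintro (h | h)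
          · exact absurd h.symm hr
          · exact absurd h.1.symm hr
      · rw [hPhir₂]
        show (x ∈ Om g₂ ∨ _) ↔ _
        simp
  · -- membership: Psi φ satisfies the left-hand conditions
    intro φ hφ
    simp only [Finset.mem_filter, Finset.mem_univ, true_and] at hφ ⊢
    obtain ⟨hφ1, hφ2⟩ := hB φ hφ
    obtain ⟨hrel, -, -⟩ := hφ
    refine ⟨?_, ?_, ?_⟩
    · intro a b
      exact hrel a.1 b.1
    · show x ∈ Om (Sum.elim id Subtype.val (φ r₁))
      rw [hφ1]
      exact hPmem x
    · show y ∈ Om (Sum.elim id Subtype.val (φ r₂))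
      rw [hφ2]
      exact hPmem y
  · -- left inverse
    intro ψ hψ
    simp only [Finset.mem_filter, Finset.mem_univ, true_and] at hψ
    obtain ⟨hp1, hq1, hne, hconst⟩ := hA ψ hψ
    funext a
    obtain ⟨i, c⟩ := a
    show Sum.elim id Subtype.val (Phi ψ i) = ψ ⟨i, c⟩
    rw [hprojPhi ψ hp1 hq1 i]
    exact hconst _ _ rfl
  · -- right inverse
    intro φ hφ
    simp only [Finset.mem_filter, Finset.mem_univ, true_and] at hφ
    obtain ⟨hφ1, hφ2⟩ := hB φ hφ
    obtain ⟨-, hroot, -⟩ := hφ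
    funext v
    by_cases h1 : v = r₁
    · subst h1
      simp only [hPhi, if_pos rfl]
      exact hφ1.symm
    · by_cases h2 : v = r₂
      · subst h2
        simp only [hPhi, if_neg h1, if_pos rfl]
        exact hφ2.symm
      · simp only [hPhi, if_neg h1, if_neg h2]
        have hnr : φ v ∉ Set.range (Sum.inr : ↥(hitSet Om x y) → VG ⊕ ↥(hitSet Om x y)) := by
          rw [hroot v]
          simp [h1, h2]
        cases hφv : φ v with
        | inl u => simp [hPsi, hφv]
        | inr w => rw [hφv] at hnr; exact absurd ⟨w, rfl⟩ hnr
  · -- weights agree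
    intro ψ hψ
    simp only [Finset.mem_filter, Finset.mem_univ, true_and] at hψ
    obtain ⟨hp1, hq1, hne, hconst⟩ := hA ψ hψ
    have hproj := hprojPhi ψ hp1 hq1
    have hfil : Finset.univ.filter
        (fun a : Σ i : VF, Fin (m i) =>
          a ≠ ⟨r₁, ⟨0, hm r₁⟩⟩ ∧ a ≠ ⟨r₂, ⟨0, hm r₂⟩⟩)
        = (Finset.univ.filter (fun i : VF => i ≠ r₁ ∧ i ≠ r₂)).sigma
            (fun i => (Finset.univ : Finset (Fin (m i)))) := by
      ext a
      obtain ⟨i, c⟩ := a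
      rw [Finset.mem_filter, Finset.mem_sigma, Finset.mem_filter]
      dsimp only
      constructor
      · rintro ⟨-, h1, h2⟩
        refine ⟨⟨Finset.mem_univ i, ?_, ?_⟩, Finset.mem_univ c⟩
        · intro h
          apply h1
          subst h
          have hc : (c : ℕ) = 0 := by have := c.isLt; omega
          exact congrArg (Sigma.mk i) (Fin.ext hc)
        · intro h
          apply h2
          subst h
          have hc : (c : ℕ) = 0 := by have := c.isLt; omega
          exact congrArg (Sigma.mk i) (Fin.ext hc)
      · rintro ⟨⟨-, h1, h2⟩, -⟩
        refine ⟨Finset.mem_univ _, ?_, ?_⟩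
        · intro h; exact h1 (congrArg Sigma.fst h)
        · intro h; exact h2 (congrArg Sigma.fst h)
    rw [hfil, Finset.prod_sigma]
    apply Finset.prod_congr rfl
    intro i hi
    have hcc : ∀ c : Fin (m i), ψ ⟨i, c⟩ = ψ ⟨i, ⟨0, hm i⟩⟩ := fun c => hconst _ _ rfl
    calc ∏ c : Fin (m i), z (ψ ⟨i, c⟩)
        = ∏ _c : Fin (m i), z (ψ ⟨i, ⟨0, hm i⟩⟩) := Finset.prod_congr rfl (fun c _ => by rw [hcc c])
      _ = z (ψ ⟨i, ⟨0, hm i⟩⟩) ^ (m i) := by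
          rw [Finset.prod_const, Finset.card_univ, Fintype.card_fin]
      _ = z (Sum.elim id Subtype.val (Phi ψ i)) ^ (m i) := by rw [hproj i]


end
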